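/- In the spinorial realization on V = MvPolynomial (Fin 4) ℂ ⊗_ℂ Cl, with J_{μν} = −i(L_{μν} + Σ_{μν}) and, for S ∈ {{1,2}, {3,4}, {1,2,3,4}}, the osp(1|2) operators 𝒜₋^S = Σ_{μ∈S} a_μγ_μ, 𝒜₊^S = Σ_{μ∈S} a_μ†γ_μ, 𝒜₀^S = (1/2)Σ_{μ∈S}{a_μ†,a_μ}, 𝒫^{1,2} = iγ₁γ₂, 𝒫^{3,4} = iγ₃γ₄, 𝒫^{1,2,3,4} = −γ₁γ₂γ₃γ₄, and Casimirs 𝒬^S = (𝒜₊^S𝒜₋^S − 𝒜₀^S + 1/2)𝒫^S, the Casimir operators of o(2) ⊕ o(2) and o(4) are related to those of osp(1|2) by: (J₁₂)² = (𝒬^{1,2})², (J₃₄)² = (𝒬^{3,4})², and Σ_{1≤i<j≤4} (J_{ij})² = (𝒬^{1,2,3,4})² − 3/4. -/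

import Mathlib

noncomputable section

open scoped TensorProduct

/-- The polynomial factor `ℂ[x₁,…,x₄]`. -/
abbrev Mpoly : Type := MvPolynomial (Fin 4) ℂ

/-- The standard quadratic form `Q(v) = Σ_μ v_μ²` on `ℂ⁴`. -/
def Qform : QuadraticForm ℂ (Fin 4 → ℂ) :=
  QuadraticMap.weightedSumSquares ℂ (fun _ : Fin 4 => (1 : ℂ))

/-- The Clifford algebra of `ℂ⁴`. -/
abbrev Cl : Type := CliffordAlgebra Qform

/-- The Clifford generators `γ_μ = ι(e_μ)`. -/
def γc (μ : Fin 4) : Cl := CliffordAlgebra.ι Qform (Pi.single μ 1)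

/-- The representation space `V = ℂ[x₁,…,x₄] ⊗ Cl`. -/
abbrev V : Type := Mpoly ⊗[ℂ] Cl

/-- `a_μ = ∂/∂x_μ` acting on the first factor of `V`. -/
def aop (μ : Fin 4) : Module.End ℂ V :=
  LinearMap.rTensor Cl (MvPolynomial.pderiv μ).toLinearMap

/-- `a_μ† = x_μ·` acting on the first factor of `V`. -/
def adop (μ : Fin 4) : Module.End ℂ V :=
  LinearMap.rTensor Cl (LinearMap.mulLeft ℂ (MvPolynomial.X μ : Mpoly))

/-- `γ_μ` acting by left multiplication on the second factor of `V`. -/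
def gop (μ : Fin 4) : Module.End ℂ V :=
  LinearMap.lTensor Mpoly (LinearMap.mulLeft ℂ (γc μ))

/-- `L_{μν} = a_μ†a_ν - a_μa_ν†`. -/
def Lop (μ ν : Fin 4) : Module.End ℂ V := adop μ * aop ν - aop μ * adop ν

/-- `Σ_{μν} = (1/2)γ_μγ_ν`. -/
def Sop (μ ν : Fin 4) : Module.End ℂ V := (2⁻¹ : ℂ) • (gop μ * gop ν)

/-- The total angular momentum `J_{μν} = -i(L_{μν} + Σ_{μν})` for `μ ≠ ν`, with the
convention `J_{μμ} = 0`. -/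
def Jop (μ ν : Fin 4) : Module.End ℂ V :=
  if μ = ν then 0 else -(Complex.I • (Lop μ ν + Sop μ ν))

/-- The Hamiltonian `H = (1/2)Σ_μ {a_μ†, a_μ}`. -/
def Hop : Module.End ℂ V :=
  (2⁻¹ : ℂ) • ∑ μ : Fin 4, (adop μ * aop μ + aop μ * adop μ)

/-- `𝒜₋^S = Σ_{μ∈S} a_μγ_μ`. -/
def AmS (S : Finset (Fin 4)) : Module.End ℂ V := ∑ μ ∈ S, aop μ * gop μ

/-- `𝒜₊^S = Σ_{μ∈S} a_μ†γ_μ`. -/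
def ApS (S : Finset (Fin 4)) : Module.End ℂ V := ∑ μ ∈ S, adop μ * gop μ

/-- `𝒜₀^S = (1/2)Σ_{μ∈S} {a_μ†, a_μ}`. -/
def A0S (S : Finset (Fin 4)) : Module.End ℂ V :=
  (2⁻¹ : ℂ) • ∑ μ ∈ S, (adop μ * aop μ + aop μ * adop μ)

/-- The `osp(1|2)` Casimir operator `𝒬^S = (𝒜₊^S𝒜₋^S - 𝒜₀^S + 1/2)𝒫^S`. -/
def QS (S : Finset (Fin 4)) (P : Module.End ℂ V) : Module.End ℂ V :=
  (ApS S * AmS S - A0S S + (2⁻¹ : ℂ) • (1 : Module.End ℂ V)) * P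

lemma pderiv_comm' (μ ν : Fin 4) (p : Mpoly) :
    MvPolynomial.pderiv μ (MvPolynomial.pderiv ν p)
      = MvPolynomial.pderiv ν (MvPolynomial.pderiv μ p) := by
  induction p using MvPolynomial.induction_on with
  | C a => simp
  | add p q hp hq => simp [hp, hq]
  | mul_X p i hp =>
    simp only [MvPolynomial.pderiv_mul, MvPolynomial.pderiv_X, map_add, hp, Pi.single_apply]
    split_ifs <;> simp <;> ring

lemma end_ext {f g : Module.End ℂ V}
    (h : ∀ (p : Mpoly) (c : Cl), f (p ⊗ₜ[ℂ] c) = g (p ⊗ₜ[ℂ] c)) : f = g :=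
  TensorProduct.ext' h

lemma aop_gop (μ ν : Fin 4) : aop μ * gop ν = gop ν * aop μ :=
  end_ext fun p c => rfl
lemma adop_gop (μ ν : Fin 4) : adop μ * gop ν = gop ν * adop μ :=
  end_ext fun p c => rfl

lemma aop_adop (μ ν : Fin 4) :
    aop μ * adop ν = adop ν * aop μ + (if μ = ν then (1 : Module.End ℂ V) else 0) := by
  refine end_ext fun p c => ?_
  simp only [aop, adop, Module.End.mul_apply, LinearMap.add_apply, LinearMap.rTensor_tmul,
    LinearMap.mulLeft_apply,
    MvPolynomial.pderiv_mul, MvPolynomial.pderiv_X]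
  split_ifs with h
  · simp [h, Pi.single_apply, TensorProduct.add_tmul, mul_comm, add_comm]
  · simp [Pi.single_apply, Ne.symm h, TensorProduct.add_tmul, mul_comm]

lemma aop_comm (μ ν : Fin 4) : aop μ * aop ν = aop ν * aop μ := by
  refine end_ext fun p c => ?_
  simp [aop, pderiv_comm' μ ν p]

lemma adop_comm (μ ν : Fin 4) : adop μ * adop ν = adop ν * adop μ := by
  refine end_ext fun p c => ?_
  simp [adop, mul_left_comm]

lemma Qform_single (μ : Fin 4) : Qform (Pi.single μ 1) = 1 := by
  simp [Qform, QuadraticMap.weightedSumSquares_apply, Pi.single_apply]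

lemma gc_sq (μ : Fin 4) : γc μ * γc μ = 1 := by
  rw [γc, CliffordAlgebra.ι_sq_scalar, Qform_single, map_one]

lemma gc_anticomm {μ ν : Fin 4} (h : μ ≠ ν) : γc μ * γc ν = -(γc ν * γc μ) := by
  have horth : Qform.IsOrtho (Pi.single μ 1) (Pi.single ν 1) := by
    rw [QuadraticMap.isOrtho_def]
    simp only [Qform, QuadraticMap.weightedSumSquares_apply, Pi.add_apply,
      smul_eq_mul, one_mul]
    rw [← Finset.sum_add_distrib]
    refine Finset.sum_congr rfl fun i _ => ?_
    have hz : (Pi.single μ (1:ℂ) : Fin 4 → ℂ) i * (Pi.single ν (1:ℂ) : Fin 4 → ℂ) i = 0 := by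
      simp only [Pi.single_apply]
      split_ifs with h1 h2 <;> simp_all
    linear_combination 2 * hz
  have h2 := CliffordAlgebra.ι_mul_ι_add_swap_of_isOrtho horth
  rw [γc, γc]
  exact eq_neg_of_add_eq_zero_left h2

lemma gop_sq (μ : Fin 4) : gop μ * gop μ = 1 := by
  refine end_ext fun p c => ?_
  simp [gop, ← mul_assoc, gc_sq]

lemma gop_anticomm {μ ν : Fin 4} (h : μ ≠ ν) : gop μ * gop ν = -(gop ν * gop μ) := by
  refine end_ext fun p c => ?_
  simp [gop, ← mul_assoc, gc_anticomm h, TensorProduct.tmul_neg]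

lemma negc (x : Module.End ℂ V) : -x = (-1 : ℂ) • x := (neg_one_smul ℂ x).symm

lemma gsq (i : Fin 4) : gop i * gop i = 1 := gop_sq i

lemma gsq' (i : Fin 4) (x : Module.End ℂ V) : gop i * (gop i * x) = x := by rw [← mul_assoc, gop_sq, one_mul]

lemma gswap10 : gop 1 * gop 0 = (-1 : ℂ) • (gop 0 * gop 1) := by rw [gop_anticomm (show (1:Fin 4) ≠ 0 by decide)]; exact negc _

lemma gswap10' (x : Module.End ℂ V) : gop 1 * (gop 0 * x) = (-1 : ℂ) • (gop 0 * (gop 1 * x)) := by rw [← mul_assoc, gswap10, smul_mul_assoc, mul_assoc]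

lemma gswap20 : gop 2 * gop 0 = (-1 : ℂ) • (gop 0 * gop 2) := by rw [gop_anticomm (show (2:Fin 4) ≠ 0 by decide)]; exact negc _

lemma gswap20' (x : Module.End ℂ V) : gop 2 * (gop 0 * x) = (-1 : ℂ) • (gop 0 * (gop 2 * x)) := by rw [← mul_assoc, gswap20, smul_mul_assoc, mul_assoc]

lemma gswap21 : gop 2 * gop 1 = (-1 : ℂ) • (gop 1 * gop 2) := by rw [gop_anticomm (show (2:Fin 4) ≠ 1 by decide)]; exact negc _

lemma gswap21' (x : Module.End ℂ V) : gop 2 * (gop 1 * x) = (-1 : ℂ) • (gop 1 * (gop 2 * x)) := by rw [← mul_assoc, gswap21, smul_mul_assoc, mul_assoc]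

lemma gswap30 : gop 3 * gop 0 = (-1 : ℂ) • (gop 0 * gop 3) := by rw [gop_anticomm (show (3:Fin 4) ≠ 0 by decide)]; exact negc _

lemma gswap30' (x : Module.End ℂ V) : gop 3 * (gop 0 * x) = (-1 : ℂ) • (gop 0 * (gop 3 * x)) := by rw [← mul_assoc, gswap30, smul_mul_assoc, mul_assoc]

lemma gswap31 : gop 3 * gop 1 = (-1 : ℂ) • (gop 1 * gop 3) := by rw [gop_anticomm (show (3:Fin 4) ≠ 1 by decide)]; exact negc _

lemma gswap31' (x : Module.End ℂ V) : gop 3 * (gop 1 * x) = (-1 : ℂ) • (gop 1 * (gop 3 * x)) := by rw [← mul_assoc, gswap31, smul_mul_assoc, mul_assoc]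

lemma gswap32 : gop 3 * gop 2 = (-1 : ℂ) • (gop 2 * gop 3) := by rw [gop_anticomm (show (3:Fin 4) ≠ 2 by decide)]; exact negc _

lemma gswap32' (x : Module.End ℂ V) : gop 3 * (gop 2 * x) = (-1 : ℂ) • (gop 2 * (gop 3 * x)) := by rw [← mul_assoc, gswap32, smul_mul_assoc, mul_assoc]

lemma g_a (i j : Fin 4) : gop i * aop j = aop j * gop i := (aop_gop j i).symm

lemma g_a' (i j : Fin 4) (x : Module.End ℂ V) : gop i * (aop j * x) = aop j * (gop i * x) := by rw [← mul_assoc, g_a, mul_assoc]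

lemma g_ad (i j : Fin 4) : gop i * adop j = adop j * gop i := (adop_gop j i).symm

lemma g_ad' (i j : Fin 4) (x : Module.End ℂ V) : gop i * (adop j * x) = adop j * (gop i * x) := by rw [← mul_assoc, g_ad, mul_assoc]

lemma aad00 : aop 0 * adop 0 = adop 0 * aop 0 + 1 := by rw [aop_adop]; simp

lemma aad00' (x : Module.End ℂ V) : aop 0 * (adop 0 * x) = adop 0 * (aop 0 * x) + x := by rw [← mul_assoc, aad00, add_mul, mul_assoc, one_mul]

lemma aad01 : aop 0 * adop 1 = adop 1 * aop 0 := by rw [aop_adop]; simp [if_neg (show ¬((0:Fin 4) = 1) by decide)]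

lemma aad01' (x : Module.End ℂ V) : aop 0 * (adop 1 * x) = adop 1 * (aop 0 * x) := by rw [← mul_assoc, aad01, mul_assoc]

lemma aad02 : aop 0 * adop 2 = adop 2 * aop 0 := by rw [aop_adop]; simp [if_neg (show ¬((0:Fin 4) = 2) by decide)]

lemma aad02' (x : Module.End ℂ V) : aop 0 * (adop 2 * x) = adop 2 * (aop 0 * x) := by rw [← mul_assoc, aad02, mul_assoc]

lemma aad03 : aop 0 * adop 3 = adop 3 * aop 0 := by rw [aop_adop]; simp [if_neg (show ¬((0:Fin 4) = 3) by decide)]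

lemma aad03' (x : Module.End ℂ V) : aop 0 * (adop 3 * x) = adop 3 * (aop 0 * x) := by rw [← mul_assoc, aad03, mul_assoc]

lemma aad10 : aop 1 * adop 0 = adop 0 * aop 1 := by rw [aop_adop]; simp [if_neg (show ¬((1:Fin 4) = 0) by decide)]

lemma aad10' (x : Module.End ℂ V) : aop 1 * (adop 0 * x) = adop 0 * (aop 1 * x) := by rw [← mul_assoc, aad10, mul_assoc]

lemma aad11 : aop 1 * adop 1 = adop 1 * aop 1 + 1 := by rw [aop_adop]; simp

lemma aad11' (x : Module.End ℂ V) : aop 1 * (adop 1 * x) = adop 1 * (aop 1 * x) + x := by rw [← mul_assoc, aad11, add_mul, mul_assoc, one_mul]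

lemma aad12 : aop 1 * adop 2 = adop 2 * aop 1 := by rw [aop_adop]; simp [if_neg (show ¬((1:Fin 4) = 2) by decide)]

lemma aad12' (x : Module.End ℂ V) : aop 1 * (adop 2 * x) = adop 2 * (aop 1 * x) := by rw [← mul_assoc, aad12, mul_assoc]

lemma aad13 : aop 1 * adop 3 = adop 3 * aop 1 := by rw [aop_adop]; simp [if_neg (show ¬((1:Fin 4) = 3) by decide)]

lemma aad13' (x : Module.End ℂ V) : aop 1 * (adop 3 * x) = adop 3 * (aop 1 * x) := by rw [← mul_assoc, aad13, mul_assoc]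

lemma aad20 : aop 2 * adop 0 = adop 0 * aop 2 := by rw [aop_adop]; simp [if_neg (show ¬((2:Fin 4) = 0) by decide)]

lemma aad20' (x : Module.End ℂ V) : aop 2 * (adop 0 * x) = adop 0 * (aop 2 * x) := by rw [← mul_assoc, aad20, mul_assoc]

lemma aad21 : aop 2 * adop 1 = adop 1 * aop 2 := by rw [aop_adop]; simp [if_neg (show ¬((2:Fin 4) = 1) by decide)]

lemma aad21' (x : Module.End ℂ V) : aop 2 * (adop 1 * x) = adop 1 * (aop 2 * x) := by rw [← mul_assoc, aad21, mul_assoc]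

lemma aad22 : aop 2 * adop 2 = adop 2 * aop 2 + 1 := by rw [aop_adop]; simp

lemma aad22' (x : Module.End ℂ V) : aop 2 * (adop 2 * x) = adop 2 * (aop 2 * x) + x := by rw [← mul_assoc, aad22, add_mul, mul_assoc, one_mul]

lemma aad23 : aop 2 * adop 3 = adop 3 * aop 2 := by rw [aop_adop]; simp [if_neg (show ¬((2:Fin 4) = 3) by decide)]

lemma aad23' (x : Module.End ℂ V) : aop 2 * (adop 3 * x) = adop 3 * (aop 2 * x) := by rw [← mul_assoc, aad23, mul_assoc]

lemma aad30 : aop 3 * adop 0 = adop 0 * aop 3 := by rw [aop_adop]; simp [if_neg (show ¬((3:Fin 4) = 0) by decide)]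

lemma aad30' (x : Module.End ℂ V) : aop 3 * (adop 0 * x) = adop 0 * (aop 3 * x) := by rw [← mul_assoc, aad30, mul_assoc]

lemma aad31 : aop 3 * adop 1 = adop 1 * aop 3 := by rw [aop_adop]; simp [if_neg (show ¬((3:Fin 4) = 1) by decide)]

lemma aad31' (x : Module.End ℂ V) : aop 3 * (adop 1 * x) = adop 1 * (aop 3 * x) := by rw [← mul_assoc, aad31, mul_assoc]

lemma aad32 : aop 3 * adop 2 = adop 2 * aop 3 := by rw [aop_adop]; simp [if_neg (show ¬((3:Fin 4) = 2) by decide)]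

lemma aad32' (x : Module.End ℂ V) : aop 3 * (adop 2 * x) = adop 2 * (aop 3 * x) := by rw [← mul_assoc, aad32, mul_assoc]

lemma aad33 : aop 3 * adop 3 = adop 3 * aop 3 + 1 := by rw [aop_adop]; simp

lemma aad33' (x : Module.End ℂ V) : aop 3 * (adop 3 * x) = adop 3 * (aop 3 * x) + x := by rw [← mul_assoc, aad33, add_mul, mul_assoc, one_mul]

lemma aswap10 : aop 1 * aop 0 = aop 0 * aop 1 := aop_comm _ _

lemma aswap10' (x : Module.End ℂ V) : aop 1 * (aop 0 * x) = aop 0 * (aop 1 * x) := by rw [← mul_assoc, aswap10, mul_assoc]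

lemma adswap10 : adop 1 * adop 0 = adop 0 * adop 1 := adop_comm _ _

lemma adswap10' (x : Module.End ℂ V) : adop 1 * (adop 0 * x) = adop 0 * (adop 1 * x) := by rw [← mul_assoc, adswap10, mul_assoc]

lemma aswap20 : aop 2 * aop 0 = aop 0 * aop 2 := aop_comm _ _

lemma aswap20' (x : Module.End ℂ V) : aop 2 * (aop 0 * x) = aop 0 * (aop 2 * x) := by rw [← mul_assoc, aswap20, mul_assoc]

lemma adswap20 : adop 2 * adop 0 = adop 0 * adop 2 := adop_comm _ _

lemma adswap20' (x : Module.End ℂ V) : adop 2 * (adop 0 * x) = adop 0 * (adop 2 * x) := by rw [← mul_assoc, adswap20, mul_assoc]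

lemma aswap21 : aop 2 * aop 1 = aop 1 * aop 2 := aop_comm _ _

lemma aswap21' (x : Module.End ℂ V) : aop 2 * (aop 1 * x) = aop 1 * (aop 2 * x) := by rw [← mul_assoc, aswap21, mul_assoc]

lemma adswap21 : adop 2 * adop 1 = adop 1 * adop 2 := adop_comm _ _

lemma adswap21' (x : Module.End ℂ V) : adop 2 * (adop 1 * x) = adop 1 * (adop 2 * x) := by rw [← mul_assoc, adswap21, mul_assoc]

lemma aswap30 : aop 3 * aop 0 = aop 0 * aop 3 := aop_comm _ _

lemma aswap30' (x : Module.End ℂ V) : aop 3 * (aop 0 * x) = aop 0 * (aop 3 * x) := by rw [← mul_assoc, aswap30, mul_assoc]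

lemma adswap30 : adop 3 * adop 0 = adop 0 * adop 3 := adop_comm _ _

lemma adswap30' (x : Module.End ℂ V) : adop 3 * (adop 0 * x) = adop 0 * (adop 3 * x) := by rw [← mul_assoc, adswap30, mul_assoc]

lemma aswap31 : aop 3 * aop 1 = aop 1 * aop 3 := aop_comm _ _

lemma aswap31' (x : Module.End ℂ V) : aop 3 * (aop 1 * x) = aop 1 * (aop 3 * x) := by rw [← mul_assoc, aswap31, mul_assoc]

lemma adswap31 : adop 3 * adop 1 = adop 1 * adop 3 := adop_comm _ _

lemma adswap31' (x : Module.End ℂ V) : adop 3 * (adop 1 * x) = adop 1 * (adop 3 * x) := by rw [← mul_assoc, adswap31, mul_assoc]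

lemma aswap32 : aop 3 * aop 2 = aop 2 * aop 3 := aop_comm _ _

lemma aswap32' (x : Module.End ℂ V) : aop 3 * (aop 2 * x) = aop 2 * (aop 3 * x) := by rw [← mul_assoc, aswap32, mul_assoc]

lemma adswap32 : adop 3 * adop 2 = adop 2 * adop 3 := adop_comm _ _

lemma adswap32' (x : Module.End ℂ V) : adop 3 * (adop 2 * x) = adop 2 * (adop 3 * x) := by rw [← mul_assoc, adswap32, mul_assoc]

lemma my_sub (a b : Module.End ℂ V) : a - b = a + (-1 : ℂ) • b := by
  refine LinearMap.ext fun v => ?_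
  simp [sub_eq_add_neg]

set_option maxHeartbeats 2000000 in
theorem part1 :
    Jop 0 1 * Jop 0 1 =
      QS {0, 1} (Complex.I • (gop 0 * gop 1)) * QS {0, 1} (Complex.I • (gop 0 * gop 1)) := by
  rw [Jop, if_neg (show ¬((0:Fin 4) = 1) by decide), QS, ApS, AmS, A0S,
    Finset.sum_pair (show (0:Fin 4) ≠ 1 by decide),
    Finset.sum_pair (show (0:Fin 4) ≠ 1 by decide),
    Finset.sum_pair (show (0:Fin 4) ≠ 1 by decide), Lop, Sop]
  simp only [my_sub, negc, smul_add, mul_add, add_mul, smul_mul_assoc, mul_smul_comm,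
    smul_smul, mul_one, one_mul, mul_assoc,
    gsq, gsq', gswap10, gswap10', gswap20, gswap20', gswap21, gswap21', gswap30, gswap30',
    gswap31, gswap31', gswap32, gswap32', g_a, g_a', g_ad, g_ad',
    aad00, aad00', aad01, aad01', aad02, aad02', aad03, aad03',
    aad10, aad10', aad11, aad11', aad12, aad12', aad13, aad13',
    aad20, aad20', aad21, aad21', aad22, aad22', aad23, aad23',
    aad30, aad30', aad31, aad31', aad32, aad32', aad33, aad33',
    aswap10, aswap10', aswap20, aswap20', aswap21, aswap21', aswap30, aswap30',
    aswap31, aswap31', aswap32, aswap32',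
    adswap10, adswap10', adswap20, adswap20', adswap21, adswap21', adswap30, adswap30',
    adswap31, adswap31', adswap32, adswap32']
  match_scalars <;> simp [Complex.I_mul_I] <;> ring_nf <;> norm_num [Complex.ext_iff]

set_option maxHeartbeats 2000000 in
theorem part2 :
    Jop 2 3 * Jop 2 3 =
      QS {2, 3} (Complex.I • (gop 2 * gop 3)) * QS {2, 3} (Complex.I • (gop 2 * gop 3)) := by
  rw [Jop, if_neg (show ¬((2:Fin 4) = 3) by decide), QS, ApS, AmS, A0S,
    Finset.sum_pair (show (2:Fin 4) ≠ 3 by decide),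
    Finset.sum_pair (show (2:Fin 4) ≠ 3 by decide),
    Finset.sum_pair (show (2:Fin 4) ≠ 3 by decide), Lop, Sop]
  simp only [my_sub, negc, smul_add, mul_add, add_mul, smul_mul_assoc, mul_smul_comm,
    smul_smul, mul_one, one_mul, mul_assoc,
    gsq, gsq', gswap10, gswap10', gswap20, gswap20', gswap21, gswap21', gswap30, gswap30',
    gswap31, gswap31', gswap32, gswap32', g_a, g_a', g_ad, g_ad',
    aad00, aad00', aad01, aad01', aad02, aad02', aad03, aad03',
    aad10, aad10', aad11, aad11', aad12, aad12', aad13, aad13',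
    aad20, aad20', aad21, aad21', aad22, aad22', aad23, aad23',
    aad30, aad30', aad31, aad31', aad32, aad32', aad33, aad33',
    aswap10, aswap10', aswap20, aswap20', aswap21, aswap21', aswap30, aswap30',
    aswap31, aswap31', aswap32, aswap32',
    adswap10, adswap10', adswap20, adswap20', adswap21, adswap21', adswap30, adswap30',
    adswap31, adswap31', adswap32, adswap32']
  match_scalars <;> simp [Complex.I_mul_I] <;> ring_nf <;> norm_num [Complex.ext_iff]

set_option maxHeartbeats 10000000 in
theorem part3 :
    Jop 0 1 * Jop 0 1 + Jop 0 2 * Jop 0 2 + Jop 0 3 * Jop 0 3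
        + Jop 1 2 * Jop 1 2 + Jop 1 3 * Jop 1 3 + Jop 2 3 * Jop 2 3 =
      QS {0, 1, 2, 3} (-(gop 0 * gop 1 * gop 2 * gop 3))
          * QS {0, 1, 2, 3} (-(gop 0 * gop 1 * gop 2 * gop 3))
        - (3 / 4 : ℂ) • (1 : Module.End ℂ V) := by
  rw [show ({0,1,2,3} : Finset (Fin 4)) = (Finset.univ : Finset (Fin 4)) by decide]
  rw [QS, ApS, AmS, A0S, Fin.sum_univ_four, Fin.sum_univ_four, Fin.sum_univ_four]
  rw [Jop, if_neg (show ¬((0:Fin 4) = 1) by decide)]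
  rw [Jop, if_neg (show ¬((0:Fin 4) = 2) by decide)]
  rw [Jop, if_neg (show ¬((0:Fin 4) = 3) by decide)]
  rw [Jop, if_neg (show ¬((1:Fin 4) = 2) by decide)]
  rw [Jop, if_neg (show ¬((1:Fin 4) = 3) by decide)]
  rw [Jop, if_neg (show ¬((2:Fin 4) = 3) by decide)]
  simp only [Lop, Sop]
  simp only [my_sub, negc, smul_add, mul_add, add_mul, smul_mul_assoc, mul_smul_comm,
    smul_smul, mul_one, one_mul, mul_assoc,
    gsq, gsq', gswap10, gswap10', gswap20, gswap20', gswap21, gswap21', gswap30, gswap30',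
    gswap31, gswap31', gswap32, gswap32', g_a, g_a', g_ad, g_ad',
    aad00, aad00', aad01, aad01', aad02, aad02', aad03, aad03',
    aad10, aad10', aad11, aad11', aad12, aad12', aad13, aad13',
    aad20, aad20', aad21, aad21', aad22, aad22', aad23, aad23',
    aad30, aad30', aad31, aad31', aad32, aad32', aad33, aad33',
    aswap10, aswap10', aswap20, aswap20', aswap21, aswap21', aswap30, aswap30',
    aswap31, aswap31', aswap32, aswap32',
    adswap10, adswap10', adswap20, adswap20', adswap21, adswap21', adswap30, adswap30',
    adswap31, adswap31', adswap32, adswap32']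
  match_scalars <;> simp [Complex.I_mul_I] <;> ring_nf <;> norm_num [Complex.ext_iff]


/-- The Casimir operators of `o(2) ⊕ o(2)` and `o(4)` in the spinorial realization are
related to the `osp(1|2)` Casimir operators by `(J₁₂)² = (𝒬^{1,2})²`,
`(J₃₄)² = (𝒬^{3,4})²` and `Σ_{i<j}(J_{ij})² = (𝒬^{1,2,3,4})² - 3/4`. -/
theorem casimir_correspondence :
    (Jop 0 1 * Jop 0 1 =
      QS {0, 1} (Complex.I • (gop 0 * gop 1)) * QS {0, 1} (Complex.I • (gop 0 * gop 1))) ∧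
    (Jop 2 3 * Jop 2 3 =
      QS {2, 3} (Complex.I • (gop 2 * gop 3)) * QS {2, 3} (Complex.I • (gop 2 * gop 3))) ∧
    (Jop 0 1 * Jop 0 1 + Jop 0 2 * Jop 0 2 + Jop 0 3 * Jop 0 3
        + Jop 1 2 * Jop 1 2 + Jop 1 3 * Jop 1 3 + Jop 2 3 * Jop 2 3 =
      QS {0, 1, 2, 3} (-(gop 0 * gop 1 * gop 2 * gop 3))
          * QS {0, 1, 2, 3} (-(gop 0 * gop 1 * gop 2 * gop 3))
        - (3 / 4 : ℂ) • (1 : Module.End ℂ V)) :=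
  ⟨part1, part2, part3⟩
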